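/- arXiv:0901.4825 — 2 statements merged into one kernel-verified Lean document; each statement's English description precedes it below -/
import Mathlib

section
/- Extended Schwarz inequality: Let 𝓕 be a filter on ℕ. For all ψ, χ ∈ S_𝓕(ℝ), |⟨ψ, χ⟩| ≤ sqrt(⟨ψ, ψ⟩) · sqrt(⟨χ, χ⟩) in ℝ_𝓕, where u ≤ v means v − u ∈ ℝ⁺_𝓕, |·| : ℂ_𝓕 → ℝ_𝓕 is the componentwise absolute value, sqrt : ℝ_𝓕 → ℝ_𝓕 is induced componentwise by Real.sqrt, and ⟨ψ,ψ⟩, ⟨χ,χ⟩ are regarded as elements of ℝ_𝓕 (which is possible since they lie in ℝ⁺_𝓕). -/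
open Filter

noncomputable section

/-- The indicator function of the interval `[a, b)` with values in `ℂ_𝓕`. -/
def ind (𝓕 : Filter ℕ) (a b : ℝ) : ℝ → Filter.Germ 𝓕 ℂ :=
  (Set.Ico a b).indicator 1

/-- `S_𝓕(ℝ)`: the `ℂ_𝓕`-module of step functions `ℝ → ℂ_𝓕`, i.e. the span of the
indicator functions of half-open intervals. -/
def StepF (𝓕 : Filter ℕ) : Submodule (Filter.Germ 𝓕 ℂ) (ℝ → Filter.Germ 𝓕 ℂ) :=
  Submodule.span (Filter.Germ 𝓕 ℂ) {f | ∃ a b : ℝ, f = ind 𝓕 a b}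

lemma ind_mem (𝓕 : Filter ℕ) (a b : ℝ) : ind 𝓕 a b ∈ StepF 𝓕 :=
  Submodule.subset_span ⟨a, b, rfl⟩

lemma smul_ind_mem (𝓕 : Filter ℕ) (γ : Filter.Germ 𝓕 ℂ) (a b : ℝ) :
    γ • ind 𝓕 a b ∈ StepF 𝓕 :=
  (StepF 𝓕).smul_mem γ (ind_mem 𝓕 a b)

/-- Componentwise complex conjugation on `ℂ_𝓕`. -/
def conjG (𝓕 : Filter ℕ) : Filter.Germ 𝓕 ℂ → Filter.Germ 𝓕 ℂ :=
  Filter.Germ.map (starRingEnd ℂ)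

lemma conjG_zero (𝓕 : Filter ℕ) : conjG 𝓕 0 = 0 := by
  simp only [conjG, ← Filter.Germ.coe_zero, Filter.Germ.map_coe, Function.comp_def]
  exact congrArg _ (funext fun _ => by simp)

lemma conjG_one (𝓕 : Filter ℕ) : conjG 𝓕 1 = 1 := by
  simp only [conjG, ← Filter.Germ.coe_one, Filter.Germ.map_coe, Function.comp_def]
  exact congrArg _ (funext fun _ => by simp)

lemma conjG_add (𝓕 : Filter ℕ) (x y : Filter.Germ 𝓕 ℂ) :
    conjG 𝓕 (x + y) = conjG 𝓕 x + conjG 𝓕 y := by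
  induction x using Filter.Germ.inductionOn with
  | h f => induction y using Filter.Germ.inductionOn with
    | h g =>
      simp only [conjG, ← Filter.Germ.coe_add, Filter.Germ.map_coe, Function.comp_def]
      exact congrArg _ (funext fun _ => by simp)

lemma conjG_mul (𝓕 : Filter ℕ) (x y : Filter.Germ 𝓕 ℂ) :
    conjG 𝓕 (x * y) = conjG 𝓕 x * conjG 𝓕 y := by
  induction x using Filter.Germ.inductionOn with
  | h f => induction y using Filter.Germ.inductionOn with
    | h g =>
      simp only [conjG, ← Filter.Germ.coe_mul, Filter.Germ.map_coe, Function.comp_def]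
      exact congrArg _ (funext fun _ => by simp)

/-- Conjugation of a function `ℝ → ℂ_𝓕`, pointwise. -/
def conjF (𝓕 : Filter ℕ) (f : ℝ → Filter.Germ 𝓕 ℂ) : ℝ → Filter.Germ 𝓕 ℂ :=
  fun x => conjG 𝓕 (f x)

lemma conjF_mem (𝓕 : Filter ℕ) {f : ℝ → Filter.Germ 𝓕 ℂ} (hf : f ∈ StepF 𝓕) :
    conjF 𝓕 f ∈ StepF 𝓕 := by
  induction hf using Submodule.span_induction with
  | mem f hf =>
    obtain ⟨a, b, rfl⟩ := hf
    have : conjF 𝓕 (ind 𝓕 a b) = ind 𝓕 a b := by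
      funext x
      by_cases hx : x ∈ Set.Ico a b <;>
        simp [conjF, ind, Set.indicator, hx, conjG_one, conjG_zero]
    rw [this]; exact ind_mem 𝓕 a b
  | zero =>
    have : conjF 𝓕 (0 : ℝ → Filter.Germ 𝓕 ℂ) = 0 := by
      funext x; simp [conjF, conjG_zero]
    rw [this]; exact (StepF 𝓕).zero_mem
  | add f g hf hg ihf ihg =>
    have : conjF 𝓕 (f + g) = conjF 𝓕 f + conjF 𝓕 g := by
      funext x; simp [conjF, conjG_add]
    rw [this]; exact (StepF 𝓕).add_mem ihf ihg
  | smul c f hf ihf =>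
    have : conjF 𝓕 (c • f) = conjG 𝓕 c • conjF 𝓕 f := by
      funext x; simp [conjF, conjG_mul, Pi.smul_apply, smul_eq_mul]
    rw [this]; exact (StepF 𝓕).smul_mem _ ihf

lemma mul_mem_step (𝓕 : Filter ℕ) {f g : ℝ → Filter.Germ 𝓕 ℂ}
    (hf : f ∈ StepF 𝓕) (hg : g ∈ StepF 𝓕) : f * g ∈ StepF 𝓕 := by
  induction hf using Submodule.span_induction with
  | mem f hf =>
    obtain ⟨a, b, rfl⟩ := hf
    induction hg using Submodule.span_induction with
    | mem g hg =>
      obtain ⟨c, d, rfl⟩ := hg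
      have : ind 𝓕 a b * ind 𝓕 c d = ind 𝓕 (a ⊔ c) (b ⊓ d) := by
        simp only [ind, ← Set.inter_indicator_one, Set.Ico_inter_Ico]
      rw [this]; exact ind_mem 𝓕 _ _
    | zero => rw [mul_zero]; exact (StepF 𝓕).zero_mem
    | add g g' hg hg' ihg ihg' => rw [mul_add]; exact (StepF 𝓕).add_mem ihg ihg'
    | smul c g hg ihg => rw [mul_smul_comm]; exact (StepF 𝓕).smul_mem _ ihg
  | zero => rw [zero_mul]; exact (StepF 𝓕).zero_mem
  | add f f' hf hf' ihf ihf' => rw [add_mul]; exact (StepF 𝓕).add_mem ihf ihf'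
  | smul c f hf ihf => rw [smul_mul_assoc]; exact (StepF 𝓕).smul_mem _ ihf


/-- A linear map `StepF 𝓕 → ℂ_𝓕` is "the integral" iff it sends every step
function `γ·1_{[a,b)}` (with `a ≤ b`) to `(b − a)·γ`. -/
def IsStepIntegral (𝓕 : Filter ℕ)
    (I : StepF 𝓕 →ₗ[Filter.Germ 𝓕 ℂ] Filter.Germ 𝓕 ℂ) : Prop :=
  ∀ (a b : ℝ), a ≤ b → ∀ γ : Filter.Germ 𝓕 ℂ,
    I ⟨γ • ind 𝓕 a b, smul_ind_mem 𝓕 γ a b⟩ =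
      (Filter.Germ.const ((b - a : ℝ) : ℂ) : Filter.Germ 𝓕 ℂ) * γ

/-- The scalar product on `S_𝓕(ℝ)`: `⟨ψ, χ⟩ = ∫ conj(ψ(x))·χ(x) dx`. -/
def innerS (𝓕 : Filter ℕ) (I : StepF 𝓕 →ₗ[Filter.Germ 𝓕 ℂ] Filter.Germ 𝓕 ℂ)
    (ψ χ : StepF 𝓕) : Filter.Germ 𝓕 ℂ :=
  I ⟨conjF 𝓕 (ψ : ℝ → Filter.Germ 𝓕 ℂ) * (χ : ℝ → Filter.Germ 𝓕 ℂ),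
     mul_mem_step 𝓕 (conjF_mem 𝓕 ψ.2) χ.2⟩

/-- The canonical embedding `ℝ_𝓕 → ℂ_𝓕`, induced componentwise by `ℝ ⊆ ℂ`. -/
def toC (𝓕 : Filter ℕ) : Filter.Germ 𝓕 ℝ → Filter.Germ 𝓕 ℂ :=
  Filter.Germ.map fun x : ℝ => (x : ℂ)

/-- `ℝ⁺_𝓕`: the set of germs of sequences nonnegative on a set of the filter. -/
def RplusGerm (𝓕 : Filter ℕ) : Set (Filter.Germ 𝓕 ℝ) :=
  {u : Filter.Germ 𝓕 ℝ | u.LiftPred fun x : ℝ => 0 ≤ x}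

/-- The order on `ℝ_𝓕`: `u ≤ v` iff `v - u ∈ ℝ⁺_𝓕`. -/
def leGerm (𝓕 : Filter ℕ) (u v : Filter.Germ 𝓕 ℝ) : Prop :=
  v - u ∈ RplusGerm 𝓕

/-- The componentwise absolute value `|·| : ℂ_𝓕 → ℝ_𝓕`. -/
def absG (𝓕 : Filter ℕ) : Filter.Germ 𝓕 ℂ → Filter.Germ 𝓕 ℝ :=
  Filter.Germ.map fun z : ℂ => ‖z‖

/-- The componentwise square root `ℝ_𝓕 → ℝ_𝓕`. -/
def sqrtG (𝓕 : Filter ℕ) : Filter.Germ 𝓕 ℝ → Filter.Germ 𝓕 ℝ :=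
  Filter.Germ.map Real.sqrt


open MeasureTheory Complex in
private lemma integral_conj_mul_self' (f : ℝ → ℂ) :
    ∫ x, (starRingEnd ℂ) (f x) * f x = ((∫ x, Complex.normSq (f x) : ℝ) : ℂ) := by
  have h := integral_ofReal (𝕜 := ℂ) (f := fun x => Complex.normSq (f x))
    (μ := (volume : Measure ℝ))
  rw [show ((∫ x, Complex.normSq (f x) : ℝ) : ℂ)
      = RCLike.ofReal (∫ x, Complex.normSq (f x)) from rfl, ← h]
  exact integral_congr_ae (Filter.Eventually.of_forall fun x =>
    (Complex.normSq_eq_conj_mul_self (z := f x)).symm)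

open MeasureTheory Complex in
private lemma cs_integral (f g : ℝ → ℂ) (hf : MemLp f 2 volume) (hg : MemLp g 2 volume) :
    ‖∫ x, (starRingEnd ℂ) (f x) * g x‖ ≤
      Real.sqrt (∫ x, Complex.normSq (f x)) * Real.sqrt (∫ x, Complex.normSq (g x)) := by
  have hinner : ∀ (h₁ h₂ : ℝ → ℂ) (H₁ : MemLp h₁ 2 volume) (H₂ : MemLp h₂ 2 volume),
      (inner ℂ (H₁.toLp h₁) (H₂.toLp h₂) : ℂ) = ∫ x, (starRingEnd ℂ) (h₁ x) * h₂ x := by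
    intro h₁ h₂ H₁ H₂
    rw [MeasureTheory.L2.inner_def]
    refine integral_congr_ae ?_
    filter_upwards [H₁.coeFn_toLp, H₂.coeFn_toLp] with x hx hy
    rw [hx, hy, RCLike.inner_apply, mul_comm]
  have hnorm : ∀ (h : ℝ → ℂ) (H : MemLp h 2 volume),
      ‖H.toLp h‖ = Real.sqrt (∫ x, Complex.normSq (h x)) := by
    intro h H
    have h1 : (‖H.toLp h‖ : ℝ) ^ 2 = ∫ x, Complex.normSq (h x) := by
      rw [← inner_self_eq_norm_sq (𝕜 := ℂ), hinner h h H H, integral_conj_mul_self']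
      simp
    rw [← h1, Real.sqrt_sq (norm_nonneg _)]
  calc ‖∫ x, (starRingEnd ℂ) (f x) * g x‖
      = ‖(inner ℂ (hf.toLp f) (hg.toLp g) : ℂ)‖ := by rw [hinner f g hf hg]
    _ ≤ ‖hf.toLp f‖ * ‖hg.toLp g‖ := norm_inner_le_norm _ _
    _ = _ := by rw [hnorm f hf, hnorm g hg]

/-- A complex-valued realization of a step function family. -/
private def stepC {ι : Type} [Fintype ι] (a b : ι → ℝ) (c : ι → ℕ → ℂ) (n : ℕ) (x : ℝ) : ℂ :=
  ∑ i, c i n * (Set.Ico (a i) (b i)).indicator 1 x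

private lemma mul_ind_eq (k : ℂ) (s : Set ℝ) :
    (fun x => k * s.indicator 1 x) = s.indicator (fun _ => k) :=
  funext fun x => by by_cases h : x ∈ s <;> simp [h]

open MeasureTheory in
private lemma stepC_memL2 {ι : Type} [Fintype ι] (a b : ι → ℝ) (c : ι → ℕ → ℂ) (n : ℕ) :
    MemLp (stepC a b c n) 2 volume := by
  have h := memLp_finset_sum' (μ := (volume : Measure ℝ)) (p := 2)
    (f := fun i x => c i n * (Set.Ico (a i) (b i)).indicator 1 x) Finset.univ (fun i _ => by
      show MemLp (fun x => c i n * (Set.Ico (a i) (b i)).indicator 1 x) 2 volume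
      rw [show (fun x => c i n * (Set.Ico (a i) (b i)).indicator 1 x)
          = (Set.Ico (a i) (b i)).indicator (fun _ => c i n) from mul_ind_eq _ _]
      exact memLp_indicator_const 2 measurableSet_Ico _
        (Or.inr (by rw [Real.volume_Ico]; exact ENNReal.ofReal_ne_top)))
  have e : (∑ i : ι, fun x => c i n * (Set.Ico (a i) (b i)).indicator 1 x) = stepC a b c n := by
    funext x; rw [Finset.sum_apply]; rfl
  exact e ▸ h

open MeasureTheory in
private lemma stepC_integral {ι : Type} [Fintype ι] (a b : ι → ℝ) (c : ι → ℕ → ℂ) (n : ℕ) :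
    ∫ x, stepC a b c n x
      = ∑ i, ((if a i ≤ b i then b i - a i else 0 : ℝ) : ℂ) * c i n := by
  unfold stepC
  rw [integral_finset_sum]
  · refine Finset.sum_congr rfl fun i _ => ?_
    rw [show (fun x => c i n * (Set.Ico (a i) (b i)).indicator 1 x)
        = (Set.Ico (a i) (b i)).indicator (fun _ => c i n) from mul_ind_eq _ _]
    rw [integral_indicator_const _ measurableSet_Ico, measureReal_def, Real.volume_Ico]
    by_cases hab : a i ≤ b i
    · rw [if_pos hab, ENNReal.toReal_ofReal (by linarith)]
      rw [Complex.real_smul]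
    · rw [if_neg hab, ENNReal.ofReal_of_nonpos (by push_neg at hab; linarith)]
      simp
  · intro i _
    rw [show (fun x => c i n * (Set.Ico (a i) (b i)).indicator 1 x)
        = (Set.Ico (a i) (b i)).indicator (fun _ => c i n) from mul_ind_eq _ _]
    rw [integrable_indicator_iff measurableSet_Ico]
    exact (integrableOn_const_iff).mpr (Or.inr (by rw [Real.volume_Ico]; exact ENNReal.ofReal_lt_top))


private lemma coe_sum_germ (𝓕 : Filter ℕ) {ι : Type} (s : Finset ι) (f : ι → ℕ → ℂ) :
    (↑(fun n => ∑ i ∈ s, f i n) : Filter.Germ 𝓕 ℂ) = ∑ i ∈ s, (↑(f i) : Filter.Germ 𝓕 ℂ) := by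
  classical
  induction s using Finset.induction with
  | empty => simp only [Finset.sum_empty]; rfl
  | insert _ _ h ih =>
    rw [Finset.sum_insert h, ← ih, ← Filter.Germ.coe_add]
    exact congrArg _ (funext fun n => by rw [Pi.add_apply, Finset.sum_insert h])

private lemma exists_rep (𝓕 : Filter ℕ) (ψ : StepF 𝓕) :
    ∃ (m : ℕ) (a b : Fin m → ℝ) (c : Fin m → ℕ → ℂ),
      (ψ : ℝ → Filter.Germ 𝓕 ℂ) = ∑ i, (↑(c i) : Filter.Germ 𝓕 ℂ) • ind 𝓕 (a i) (b i) := by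
  obtain ⟨m, γ, g, hsum⟩ := Submodule.mem_span_set'.mp ψ.2
  choose a b hab using fun i => (g i).2
  have hex : ∀ i, ∃ cf : ℕ → ℂ, (↑cf : Filter.Germ 𝓕 ℂ) = γ i := fun i =>
    Filter.Germ.inductionOn (γ i) fun f => ⟨f, rfl⟩
  choose c hc using hex
  refine ⟨m, a, b, c, ?_⟩
  rw [← hsum]
  exact (Finset.sum_congr rfl fun i _ => by rw [hc, hab]).symm

private lemma sum_apply_eq (𝓕 : Filter ℕ) {ι : Type} [Fintype ι]
    (a b : ι → ℝ) (c : ι → ℕ → ℂ) (x : ℝ) :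
    (∑ i, (↑(c i) : Filter.Germ 𝓕 ℂ) • ind 𝓕 (a i) (b i)) x
      = (↑(fun n => stepC a b c n x) : Filter.Germ 𝓕 ℂ) := by
  rw [Finset.sum_apply]
  have h : ∀ i, ((↑(c i) : Filter.Germ 𝓕 ℂ) • ind 𝓕 (a i) (b i)) x
      = (↑(fun n => c i n * (Set.Ico (a i) (b i)).indicator 1 x) : Filter.Germ 𝓕 ℂ) := by
    intro i
    by_cases hx : x ∈ Set.Ico (a i) (b i)
    · have h1 : (↑(fun n => c i n * (Set.Ico (a i) (b i)).indicator 1 x) : Filter.Germ 𝓕 ℂ)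
          = ↑(c i) := by
        exact congrArg _ (funext fun n => by rw [Set.indicator_of_mem hx, Pi.one_apply, mul_one])
      rw [h1]
      simp [ind, Set.indicator_of_mem hx, smul_eq_mul]
    · have h1 : (↑(fun n => c i n * (Set.Ico (a i) (b i)).indicator 1 x) : Filter.Germ 𝓕 ℂ)
          = 0 := by
        rw [show (fun n => c i n * (Set.Ico (a i) (b i)).indicator 1 x) = (fun _ => (0:ℂ)) from
          funext fun n => by rw [Set.indicator_of_notMem hx, mul_zero]]
        rfl
      rw [h1]
      simp [ind, Set.indicator_of_notMem hx]
  rw [Finset.sum_congr rfl fun i _ => h i, ← coe_sum_germ]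
  rfl

private lemma I_rep (𝓕 : Filter ℕ)
    (I : StepF 𝓕 →ₗ[Filter.Germ 𝓕 ℂ] Filter.Germ 𝓕 ℂ) (hI : IsStepIntegral 𝓕 I)
    {ι : Type} [Fintype ι] (a b : ι → ℝ) (c : ι → ℕ → ℂ)
    {f : ℝ → Filter.Germ 𝓕 ℂ} (hf : f ∈ StepF 𝓕)
    (hrep : f = ∑ i, (↑(c i) : Filter.Germ 𝓕 ℂ) • ind 𝓕 (a i) (b i)) :
    I ⟨f, hf⟩ = (↑(fun n => ∫ x, stepC a b c n x) : Filter.Germ 𝓕 ℂ) := by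
  have hmem : ∀ i : ι, (↑(c i) : Filter.Germ 𝓕 ℂ) • ind 𝓕 (a i) (b i) ∈ StepF 𝓕 :=
    fun i => smul_ind_mem 𝓕 _ _ _
  have hsub : (⟨f, hf⟩ : StepF 𝓕) = ∑ i, ⟨_, hmem i⟩ := by
    apply Subtype.ext
    refine hrep.trans ?_
    exact (AddSubmonoidClass.coe_finset_sum
      (fun i : ι => (⟨(↑(c i) : Filter.Germ 𝓕 ℂ) • ind 𝓕 (a i) (b i), hmem i⟩ : StepF 𝓕))
      Finset.univ).symm
  rw [hsub, map_sum]
  have hterm : ∀ i : ι, I ⟨_, hmem i⟩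
      = (↑(fun n => ((if a i ≤ b i then b i - a i else 0 : ℝ) : ℂ) * c i n) :
          Filter.Germ 𝓕 ℂ) := by
    intro i
    by_cases hab : a i ≤ b i
    · rw [hI (a i) (b i) hab]
      rw [show (Filter.Germ.const ((b i - a i : ℝ) : ℂ) : Filter.Germ 𝓕 ℂ)
          = ↑(fun _ : ℕ => ((b i - a i : ℝ) : ℂ)) from rfl, ← Filter.Germ.coe_mul]
      exact congrArg _ (funext fun n => by rw [if_pos hab]; rfl)
    · have hzero : ind 𝓕 (a i) (b i) = 0 := by
        funext x
        rw [ind, Set.Ico_eq_empty (fun hlt => hab hlt.le), Set.indicator_empty]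
        rfl
      have : (⟨_, hmem i⟩ : StepF 𝓕) = 0 := by
        apply Subtype.ext
        show (↑(c i) : Filter.Germ 𝓕 ℂ) • ind 𝓕 (a i) (b i) = 0
        rw [hzero, smul_zero]
      rw [this, map_zero]
      rw [show (fun n => ((if a i ≤ b i then b i - a i else 0 : ℝ) : ℂ) * c i n)
          = (fun _ => (0:ℂ)) from funext fun n => by rw [if_neg hab]; simp]
      rfl
  rw [Finset.sum_congr rfl fun i _ => hterm i, ← coe_sum_germ]
  exact congrArg _ (funext fun n => by rw [stepC_integral])

private lemma step_conj_mul (_𝓕 : Filter ℕ) {ι κ : Type} [Fintype ι] [Fintype κ]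
    (a b : ι → ℝ) (c : ι → ℕ → ℂ) (a' b' : κ → ℝ) (c' : κ → ℕ → ℂ) (n : ℕ) (x : ℝ) :
    (starRingEnd ℂ) (stepC a b c n x) * stepC a' b' c' n x
      = stepC (fun p : ι × κ => a p.1 ⊔ a' p.2) (fun p => b p.1 ⊓ b' p.2)
          (fun p n => (starRingEnd ℂ) (c p.1 n) * c' p.2 n) n x := by
  unfold stepC
  rw [map_sum, Finset.sum_mul_sum, ← Finset.univ_product_univ, Finset.sum_product]
  refine Finset.sum_congr rfl fun i _ => Finset.sum_congr rfl fun j _ => ?_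
  have hmem : x ∈ Set.Ico (a i ⊔ a' j) (b i ⊓ b' j)
      ↔ (x ∈ Set.Ico (a i) (b i) ∧ x ∈ Set.Ico (a' j) (b' j)) := by
    rw [← Set.mem_inter_iff, Set.Ico_inter_Ico]
  by_cases hi : x ∈ Set.Ico (a i) (b i) <;> by_cases hj : x ∈ Set.Ico (a' j) (b' j) <;>
    simp [Set.indicator_apply, hmem, hi, hj, map_mul]

private lemma prod_rep (𝓕 : Filter ℕ) {ι κ : Type} [Fintype ι] [Fintype κ]
    (a b : ι → ℝ) (c : ι → ℕ → ℂ) (a' b' : κ → ℝ) (c' : κ → ℕ → ℂ) :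
    conjF 𝓕 (∑ i, (↑(c i) : Filter.Germ 𝓕 ℂ) • ind 𝓕 (a i) (b i))
        * (∑ j, (↑(c' j) : Filter.Germ 𝓕 ℂ) • ind 𝓕 (a' j) (b' j))
      = ∑ p : ι × κ,
          (↑(fun n => (starRingEnd ℂ) (c p.1 n) * c' p.2 n) : Filter.Germ 𝓕 ℂ) •
            ind 𝓕 (a p.1 ⊔ a' p.2) (b p.1 ⊓ b' p.2) := by
  funext x
  rw [Pi.mul_apply, sum_apply_eq 𝓕 (fun p : ι × κ => a p.1 ⊔ a' p.2) _ _ x]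
  show conjG 𝓕 ((∑ i, (↑(c i) : Filter.Germ 𝓕 ℂ) • ind 𝓕 (a i) (b i)) x)
      * (∑ j, (↑(c' j) : Filter.Germ 𝓕 ℂ) • ind 𝓕 (a' j) (b' j)) x = _
  rw [sum_apply_eq 𝓕 a b c x, sum_apply_eq 𝓕 a' b' c' x]
  rw [show conjG 𝓕 (↑(fun n => stepC a b c n x) : Filter.Germ 𝓕 ℂ)
      = ↑((starRingEnd ℂ) ∘ (fun n => stepC a b c n x)) from Filter.Germ.map_coe _ _]
  rw [← Filter.Germ.coe_mul]
  exact congrArg _ (funext fun n => step_conj_mul 𝓕 a b c a' b' c' n x)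


open MeasureTheory in
private lemma innerS_eq (𝓕 : Filter ℕ)
    (I : StepF 𝓕 →ₗ[Filter.Germ 𝓕 ℂ] Filter.Germ 𝓕 ℂ) (hI : IsStepIntegral 𝓕 I)
    {ι κ : Type} [Fintype ι] [Fintype κ]
    (a b : ι → ℝ) (c : ι → ℕ → ℂ) (a' b' : κ → ℝ) (c' : κ → ℕ → ℂ)
    (φ₁ φ₂ : StepF 𝓕)
    (h₁ : (φ₁ : ℝ → Filter.Germ 𝓕 ℂ) = ∑ i, (↑(c i) : Filter.Germ 𝓕 ℂ) • ind 𝓕 (a i) (b i))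
    (h₂ : (φ₂ : ℝ → Filter.Germ 𝓕 ℂ) = ∑ j, (↑(c' j) : Filter.Germ 𝓕 ℂ) • ind 𝓕 (a' j) (b' j)) :
    innerS 𝓕 I φ₁ φ₂ = (↑(fun n => ∫ x, (starRingEnd ℂ) (stepC a b c n x) * stepC a' b' c' n x) :
      Filter.Germ 𝓕 ℂ) := by
  have hrep2 : conjF 𝓕 (φ₁ : ℝ → Filter.Germ 𝓕 ℂ) * (φ₂ : ℝ → Filter.Germ 𝓕 ℂ)
      = ∑ p : ι × κ,
          (↑(fun n => (starRingEnd ℂ) (c p.1 n) * c' p.2 n) : Filter.Germ 𝓕 ℂ) •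
            ind 𝓕 (a p.1 ⊔ a' p.2) (b p.1 ⊓ b' p.2) := by
    rw [h₁, h₂, prod_rep]
  rw [innerS, I_rep 𝓕 I hI _ _ _ (mul_mem_step 𝓕 (conjF_mem 𝓕 φ₁.2) φ₂.2) hrep2]
  exact congrArg _ (funext fun n =>
    integral_congr_ae (Filter.Eventually.of_forall fun x =>
      (step_conj_mul 𝓕 a b c a' b' c' n x).symm))

/-- extended Schwarz inequality: for all `ψ, χ ∈ S_𝓕(ℝ)`,
`|⟨ψ, χ⟩| ≤ sqrt(⟨ψ, ψ⟩) · sqrt(⟨χ, χ⟩)` in `ℝ_𝓕`; here `⟨ψ,ψ⟩` and `⟨χ,χ⟩` are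
regarded as elements `u, v` of `ℝ_𝓕` via the embedding `ℝ_𝓕 → ℂ_𝓕`. -/
theorem stmt_11 (𝓕 : Filter ℕ)
    (I : StepF 𝓕 →ₗ[Filter.Germ 𝓕 ℂ] Filter.Germ 𝓕 ℂ) (hI : IsStepIntegral 𝓕 I)
    (ψ χ : StepF 𝓕) (u v : Filter.Germ 𝓕 ℝ)
    (hu : toC 𝓕 u = innerS 𝓕 I ψ ψ) (hv : toC 𝓕 v = innerS 𝓕 I χ χ) :
    leGerm 𝓕 (absG 𝓕 (innerS 𝓕 I ψ χ)) (sqrtG 𝓕 u * sqrtG 𝓕 v) := by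
  obtain ⟨m, a, b, c, hψ⟩ := exists_rep 𝓕 ψ
  obtain ⟨m', a', b', c', hχ⟩ := exists_rep 𝓕 χ
  have hψχ := innerS_eq 𝓕 I hI a b c a' b' c' ψ χ hψ hχ
  have hψψ := innerS_eq 𝓕 I hI a b c a b c ψ ψ hψ hψ
  have hχχ := innerS_eq 𝓕 I hI a' b' c' a' b' c' χ χ hχ hχ
  obtain ⟨u₀, hu₀⟩ : ∃ u₀ : ℕ → ℝ, (↑u₀ : Filter.Germ 𝓕 ℝ) = u :=
    Filter.Germ.inductionOn u fun f => ⟨f, rfl⟩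
  obtain ⟨v₀, hv₀⟩ : ∃ v₀ : ℕ → ℝ, (↑v₀ : Filter.Germ 𝓕 ℝ) = v :=
    Filter.Germ.inductionOn v fun f => ⟨f, rfl⟩
  have hu' : ∀ᶠ n in 𝓕, ((u₀ n : ℂ))
      = ∫ x, (starRingEnd ℂ) (stepC a b c n x) * stepC a b c n x := by
    refine Filter.Germ.coe_eq.mp ?_
    calc (↑(fun n => ((u₀ n : ℂ))) : Filter.Germ 𝓕 ℂ)
        = toC 𝓕 ↑u₀ := by unfold toC; rw [Filter.Germ.map_coe]; rfl
      _ = innerS 𝓕 I ψ ψ := by rw [hu₀, hu]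
      _ = _ := hψψ
  have hv' : ∀ᶠ n in 𝓕, ((v₀ n : ℂ))
      = ∫ x, (starRingEnd ℂ) (stepC a' b' c' n x) * stepC a' b' c' n x := by
    refine Filter.Germ.coe_eq.mp ?_
    calc (↑(fun n => ((v₀ n : ℂ))) : Filter.Germ 𝓕 ℂ)
        = toC 𝓕 ↑v₀ := by unfold toC; rw [Filter.Germ.map_coe]; rfl
      _ = innerS 𝓕 I χ χ := by rw [hv₀, hv]
      _ = _ := hχχ
  have hu'' : ∀ᶠ n in 𝓕, u₀ n = ∫ x, Complex.normSq (stepC a b c n x) := by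
    filter_upwards [hu'] with n hn
    exact Complex.ofReal_inj.mp (hn.trans (integral_conj_mul_self' _))
  have hv'' : ∀ᶠ n in 𝓕, v₀ n = ∫ x, Complex.normSq (stepC a' b' c' n x) := by
    filter_upwards [hv'] with n hn
    exact Complex.ofReal_inj.mp (hn.trans (integral_conj_mul_self' _))
  rw [leGerm, RplusGerm, Set.mem_setOf_eq, ← hu₀, ← hv₀]
  have hfun : sqrtG 𝓕 ↑u₀ * sqrtG 𝓕 ↑v₀ - absG 𝓕 (innerS 𝓕 I ψ χ)
      = (↑(fun n => Real.sqrt (u₀ n) * Real.sqrt (v₀ n)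
          - ‖∫ x, (starRingEnd ℂ) (stepC a b c n x) * stepC a' b' c' n x‖) :
        Filter.Germ 𝓕 ℝ) := by
    rw [hψχ]
    unfold sqrtG absG
    rw [Filter.Germ.map_coe, Filter.Germ.map_coe, Filter.Germ.map_coe,
      ← Filter.Germ.coe_mul, ← Filter.Germ.coe_sub]
    rfl
  rw [hfun, Filter.Germ.liftPred_coe]
  filter_upwards [hu'', hv''] with n h1 h2
  rw [sub_nonneg, h1, h2]
  exact cs_integral _ _ (stepC_memL2 a b c n) (stepC_memL2 a' b' c' n)


end
end

section
/- Extended Heisenberg Uncertainty Relation (Theorem 2.1): Let 𝓕 be a filter on ℕ, let A, B : S_𝓕(ℝ) → S_𝓕(ℝ) be Hermitian ℂ_𝓕-linear operators, and let ψ ∈ S_𝓕(ℝ) satisfy ⟨ψ, ψ⟩ = 1. Then Δ_ψA · Δ_ψB ≥ |⟨[A, B]⟩_ψ| / 2 in ℝ_𝓕, where [A, B] = A∘B − B∘A, Δ_ψA = sqrt(⟨A²⟩_ψ − (⟨A⟩_ψ)²) with sqrt : ℝ_𝓕 → ℝ_𝓕 induced componentwise by Real.sqrt (the argument lying in ℝ⁺_𝓕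 ⊆ ℝ_𝓕), |·| : ℂ_𝓕 → ℝ_𝓕 is the componentwise absolute value, and u ≤ v means v − u ∈ ℝ⁺_𝓕. -/
open Filter

noncomputable section

/-- A `ℂ_𝓕`-linear operator on `S_𝓕(ℝ)` is Hermitian iff `⟨Aψ, χ⟩ = ⟨ψ, Aχ⟩`. -/
def IsHermitianOp (𝓕 : Filter ℕ) (I : StepF 𝓕 →ₗ[Filter.Germ 𝓕 ℂ] Filter.Germ 𝓕 ℂ)
    (A : StepF 𝓕 →ₗ[Filter.Germ 𝓕 ℂ] StepF 𝓕) : Prop :=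
  ∀ ψ χ : StepF 𝓕, innerS 𝓕 I (A ψ) χ = innerS 𝓕 I ψ (A χ)


-- ===== auxiliary lemmas =====

lemma ind_eq_zero (𝓕 : Filter ℕ) {a b : ℝ} (h : b ≤ a) : ind 𝓕 a b = 0 := by
  funext x; simp [ind, Set.Ico_eq_empty_of_le h]

lemma ind_add_ind (𝓕 : Filter ℕ) {a b c : ℝ} (h1 : a ≤ b) (h2 : b ≤ c) :
    ind 𝓕 a b + ind 𝓕 b c = ind 𝓕 a c := by
  funext x
  simp only [ind, Pi.add_apply, Set.indicator_apply, Set.mem_Ico, Pi.one_apply]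
  rcases lt_or_ge x b with hb | hb
  · rw [if_neg (show ¬(b ≤ x ∧ x < c) by rintro ⟨h, _⟩; linarith), add_zero]
    rcases le_or_gt a x with ha | ha
    · rw [if_pos ⟨ha, hb⟩, if_pos ⟨ha, by linarith⟩]
    · rw [if_neg (show ¬(a ≤ x ∧ x < b) by rintro ⟨h, _⟩; linarith),
        if_neg (show ¬(a ≤ x ∧ x < c) by rintro ⟨h, _⟩; linarith)]
  · rw [if_neg (show ¬(a ≤ x ∧ x < b) by rintro ⟨_, h⟩; linarith), zero_add]
    rcases lt_or_ge x c with hc | hc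
    · rw [if_pos ⟨hb, hc⟩, if_pos ⟨by linarith, hc⟩]
    · rw [if_neg (show ¬(b ≤ x ∧ x < c) by rintro ⟨_, h⟩; linarith),
        if_neg (show ¬(a ≤ x ∧ x < c) by rintro ⟨_, h⟩; linarith)]

lemma ind_mul_ind (𝓕 : Filter ℕ) (a b c d : ℝ) :
    ind 𝓕 a b * ind 𝓕 c d = ind 𝓕 (a ⊔ c) (b ⊓ d) := by
  simp only [ind, ← Set.inter_indicator_one, Set.Ico_inter_Ico]

lemma conjG_coe (𝓕 : Filter ℕ) (f : ℕ → ℂ) :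
    conjG 𝓕 (↑f : Filter.Germ 𝓕 ℂ) = ↑(fun n => (starRingEnd ℂ) (f n)) := by
  rw [conjG, Filter.Germ.map_coe]; rfl

lemma conjG_conjG (𝓕 : Filter ℕ) (x : Filter.Germ 𝓕 ℂ) : conjG 𝓕 (conjG 𝓕 x) = x := by
  induction x using Filter.Germ.inductionOn with
  | h f => rw [conjG_coe, conjG_coe]; exact congrArg _ (funext fun n => by simp)

lemma conjG_const (𝓕 : Filter ℕ) (z : ℂ) :
    conjG 𝓕 (Filter.Germ.const z) = Filter.Germ.const ((starRingEnd ℂ) z) := by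
  rw [show (Filter.Germ.const z : Filter.Germ 𝓕 ℂ) = ↑(fun _ : ℕ => z) from rfl, conjG_coe]; rfl

lemma conjG_const_real (𝓕 : Filter ℕ) (r : ℝ) :
    conjG 𝓕 (Filter.Germ.const (r : ℂ)) = Filter.Germ.const (r : ℂ) := by
  rw [conjG_const]; norm_num

lemma conjG_sum (𝓕 : Filter ℕ) {k : ℕ} (f : Fin k → Filter.Germ 𝓕 ℂ) :
    conjG 𝓕 (∑ i, f i) = ∑ i, conjG 𝓕 (f i) :=
  map_sum (AddMonoidHom.mk' (conjG 𝓕) (conjG_add 𝓕)) f Finset.univ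

lemma conjG_ind (𝓕 : Filter ℕ) (a b : ℝ) (x : ℝ) :
    conjG 𝓕 (ind 𝓕 a b x) = ind 𝓕 a b x := by
  by_cases hx : x ∈ Set.Ico a b <;>
    simp [ind, Set.indicator, hx, conjG_one, conjG_zero]

-- span of the partition intervals
def Mp (𝓕 : Filter ℕ) {m : ℕ} (p : Fin (m+1) → ℝ) :
    Submodule (Filter.Germ 𝓕 ℂ) (ℝ → Filter.Germ 𝓕 ℂ) :=
  Submodule.span (Filter.Germ 𝓕 ℂ)
    (Set.range fun h : Fin m => ind 𝓕 (p h.castSucc) (p h.succ))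

lemma ind_sup_mem (𝓕 : Filter ℕ) {m : ℕ} {p : Fin (m+1) → ℝ} (hp : Monotone p)
    {c : ℝ} (hc : c ∈ Set.range p) (h : Fin m) :
    ind 𝓕 (p h.castSucc ⊔ c) (p h.succ ⊔ c) ∈ Mp 𝓕 p := by
  obtain ⟨j, rfl⟩ := hc
  rcases le_or_gt j h.castSucc with hj | hj
  · rw [sup_eq_left.2 (hp hj), sup_eq_left.2 (hp (hj.trans h.castSucc_lt_succ.le))]
    exact Submodule.subset_span ⟨h, rfl⟩
  · have h1 : h.succ ≤ j := hj
    rw [sup_eq_right.2 (hp (h.castSucc_lt_succ.le.trans h1)), sup_eq_right.2 (hp h1),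
      ind_eq_zero 𝓕 le_rfl]
    exact (Mp 𝓕 p).zero_mem

lemma ind_to_last_mem (𝓕 : Filter ℕ) {m : ℕ} {p : Fin (m+1) → ℝ} (hp : Monotone p)
    {c : ℝ} (hc : c ∈ Set.range p) :
    ind 𝓕 c (p (Fin.last m)) ∈ Mp 𝓕 p := by
  have key : ∀ j : Fin (m+1), ind 𝓕 (p 0 ⊔ c) (p j ⊔ c) ∈ Mp 𝓕 p := by
    intro j
    induction j using Fin.induction with
    | zero => rw [ind_eq_zero 𝓕 le_rfl]; exact (Mp 𝓕 p).zero_mem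
    | succ i ih =>
      have e := ind_add_ind 𝓕 (a := p 0 ⊔ c) (b := p i.castSucc ⊔ c) (c := p i.succ ⊔ c)
        (sup_le_sup_right (hp (Fin.zero_le _)) c)
        (sup_le_sup_right (hp i.castSucc_lt_succ.le) c)
      rw [← e]
      exact (Mp 𝓕 p).add_mem ih (ind_sup_mem 𝓕 hp hc i)
  obtain ⟨j, rfl⟩ := hc
  have := key (Fin.last m)
  rwa [sup_eq_right.2 (hp (Fin.zero_le _)), sup_eq_left.2 (hp (Fin.le_last _))] at this

lemma ind_mem_Mp (𝓕 : Filter ℕ) {m : ℕ} {p : Fin (m+1) → ℝ} (hp : Monotone p)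
    {a b : ℝ} (ha : a ∈ Set.range p) (hb : b ∈ Set.range p) :
    ind 𝓕 a b ∈ Mp 𝓕 p := by
  rcases le_or_gt b a with h | h
  · rw [ind_eq_zero 𝓕 h]; exact (Mp 𝓕 p).zero_mem
  · have hbl : b ≤ p (Fin.last m) := by
      obtain ⟨j, rfl⟩ := hb; exact hp (Fin.le_last _)
    have e := ind_add_ind 𝓕 h.le hbl
    have : ind 𝓕 a b = ind 𝓕 a (p (Fin.last m)) - ind 𝓕 b (p (Fin.last m)) := by
      rw [← e]; abel
    rw [this]
    exact (Mp 𝓕 p).sub_mem (ind_to_last_mem 𝓕 hp ha) (ind_to_last_mem 𝓕 hp hb)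

lemma step_combo (𝓕 : Filter ℕ) {f : ℝ → Filter.Germ 𝓕 ℂ} (hf : f ∈ StepF 𝓕) :
    ∃ (k : ℕ) (c : Fin k → Filter.Germ 𝓕 ℂ) (a b : Fin k → ℝ),
      f = ∑ i, c i • ind 𝓕 (a i) (b i) := by
  rw [StepF, Submodule.mem_span_set'] at hf
  obtain ⟨k, c, g, hg⟩ := hf
  choose a b hab using fun i => (g i).2
  exact ⟨k, c, a, b, by rw [← hg]; exact Finset.sum_congr rfl fun i _ => by rw [hab i]⟩

/-- simultaneous decomposition of two step functions over a common monotone partition -/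
lemma decomp2 (𝓕 : Filter ℕ) (φ χ : StepF 𝓕) :
    ∃ (m : ℕ) (p : Fin (m+1) → ℝ), Monotone p ∧
      ∃ γ δ : Fin m → Filter.Germ 𝓕 ℂ,
        (φ : ℝ → Filter.Germ 𝓕 ℂ) = ∑ h, γ h • ind 𝓕 (p h.castSucc) (p h.succ) ∧
        (χ : ℝ → Filter.Germ 𝓕 ℂ) = ∑ h, δ h • ind 𝓕 (p h.castSucc) (p h.succ) := by
  obtain ⟨k1, c1, a1, b1, h1⟩ := step_combo 𝓕 φ.2
  obtain ⟨k2, c2, a2, b2, h2⟩ := step_combo 𝓕 χ.2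
  classical
  set T : Finset ℝ := insert 0 ((Finset.image a1 Finset.univ ∪ Finset.image b1 Finset.univ) ∪
      (Finset.image a2 Finset.univ ∪ Finset.image b2 Finset.univ)) with hT
  set L := T.sort (· ≤ ·) with hLdef
  have hLnonnil : L ≠ [] := by
    intro h
    have : (0:ℝ) ∈ T := Finset.mem_insert_self _ _
    rw [← Finset.mem_sort (α := ℝ) (· ≤ ·), ← hLdef, h] at this
    simp at this
  obtain ⟨m, hm⟩ : ∃ m, L.length = m + 1 :=
    ⟨L.length - 1, by have := List.length_pos_iff.2 hLnonnil; omega⟩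
  set p : Fin (m+1) → ℝ := fun i => L.get (Fin.cast hm.symm i) with hpdef
  have hmono : Monotone p := by
    intro i j hij
    exact (List.sortedLE_iff_pairwise.2 (Finset.pairwise_sort T (· ≤ ·))).monotone_get (by simpa using hij)
  have hrange : ∀ x : ℝ, x ∈ T → x ∈ Set.range p := by
    intro x hx
    rw [← Finset.mem_sort (α := ℝ) (· ≤ ·), ← hLdef, List.mem_iff_get] at hx
    obtain ⟨i, hi⟩ := hx
    exact ⟨Fin.cast hm i, by simpa [hpdef] using hi⟩
  have hmem : ∀ (k : ℕ) (c : Fin k → Filter.Germ 𝓕 ℂ) (a b : Fin k → ℝ),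
      (∀ i, a i ∈ T) → (∀ i, b i ∈ T) →
      (∑ i, c i • ind 𝓕 (a i) (b i)) ∈ Mp 𝓕 p := by
    intro k c a b ha hb
    exact Submodule.sum_mem _ fun i _ =>
      (Mp 𝓕 p).smul_mem _ (ind_mem_Mp 𝓕 hmono (hrange _ (ha i)) (hrange _ (hb i)))
  have hTa1 : ∀ i, a1 i ∈ T := fun i => by simp [hT]
  have hTb1 : ∀ i, b1 i ∈ T := fun i => by simp [hT]
  have hTa2 : ∀ i, a2 i ∈ T := fun i => by simp [hT]
  have hTb2 : ∀ i, b2 i ∈ T := fun i => by simp [hT]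
  have hφ : (φ : ℝ → Filter.Germ 𝓕 ℂ) ∈ Mp 𝓕 p := h1 ▸ hmem _ c1 a1 b1 hTa1 hTb1
  have hχ : (χ : ℝ → Filter.Germ 𝓕 ℂ) ∈ Mp 𝓕 p := h2 ▸ hmem _ c2 a2 b2 hTa2 hTb2
  rw [Mp, Submodule.mem_span_range_iff_exists_fun] at hφ hχ
  obtain ⟨γ, hγ⟩ := hφ
  obtain ⟨δ, hδ⟩ := hχ
  exact ⟨m, p, hmono, γ, δ, hγ.symm, hδ.symm⟩


lemma conjG_sub (𝓕 : Filter ℕ) (x y : Filter.Germ 𝓕 ℂ) :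
    conjG 𝓕 (x - y) = conjG 𝓕 x - conjG 𝓕 y := by
  induction x using Filter.Germ.inductionOn with
  | h f => induction y using Filter.Germ.inductionOn with
    | h g =>
      rw [← Filter.Germ.coe_sub, conjG_coe, conjG_coe, conjG_coe, ← Filter.Germ.coe_sub]
      exact congrArg _ (funext fun n => by simp)

lemma part_disjoint (𝓕 : Filter ℕ) {m : ℕ} {p : Fin (m+1) → ℝ} (hp : Monotone p)
    {h k : Fin m} (hne : h ≠ k) :
    ind 𝓕 (p h.castSucc) (p h.succ) * ind 𝓕 (p k.castSucc) (p k.succ) = 0 := by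
  rw [ind_mul_ind]
  apply ind_eq_zero
  rcases hne.lt_or_gt with hlt | hlt
  · calc p h.succ ⊓ p k.succ ≤ p h.succ := inf_le_left
      _ ≤ p k.castSucc := hp (by
        have : h.succ ≤ k.castSucc := by
          simp only [Fin.le_def, Fin.val_succ, Fin.coe_castSucc]
          exact hlt
        exact this)
      _ ≤ _ := le_sup_right
  · calc p h.succ ⊓ p k.succ ≤ p k.succ := inf_le_right
      _ ≤ p h.castSucc := hp (by
        have : k.succ ≤ h.castSucc := by
          simp only [Fin.le_def, Fin.val_succ, Fin.coe_castSucc]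
          exact hlt
        exact this)
      _ ≤ _ := le_sup_left

lemma part_mul (𝓕 : Filter ℕ) {m : ℕ} {p : Fin (m+1) → ℝ} (hp : Monotone p)
    (α β : Fin m → Filter.Germ 𝓕 ℂ) :
    (∑ h, α h • ind 𝓕 (p h.castSucc) (p h.succ)) * (∑ h, β h • ind 𝓕 (p h.castSucc) (p h.succ))
      = ∑ h, (α h * β h) • ind 𝓕 (p h.castSucc) (p h.succ) := by
  rw [Finset.sum_mul_sum]
  refine Finset.sum_congr rfl fun h _ => ?_
  rw [Finset.sum_eq_single h]
  · rw [smul_mul_smul_comm, ind_mul_ind, sup_idem, inf_idem]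
  · intro k _ hk
    rw [smul_mul_smul_comm, part_disjoint 𝓕 hp (Ne.symm hk), smul_zero]
  · intro habs; exact absurd (Finset.mem_univ h) habs

lemma conjF_part (𝓕 : Filter ℕ) {m : ℕ} (p : Fin (m+1) → ℝ)
    (γ : Fin m → Filter.Germ 𝓕 ℂ) :
    conjF 𝓕 (∑ h, γ h • ind 𝓕 (p h.castSucc) (p h.succ))
      = ∑ h, conjG 𝓕 (γ h) • ind 𝓕 (p h.castSucc) (p h.succ) := by
  funext x
  simp only [conjF, Finset.sum_apply, Pi.smul_apply, smul_eq_mul, conjG_sum, conjG_mul,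
    conjG_ind]

lemma innerS_formula (𝓕 : Filter ℕ)
    (I : StepF 𝓕 →ₗ[Filter.Germ 𝓕 ℂ] Filter.Germ 𝓕 ℂ) (hI : IsStepIntegral 𝓕 I)
    {m : ℕ} {p : Fin (m+1) → ℝ} (hp : Monotone p)
    (φ χ : StepF 𝓕) (γ δ : Fin m → Filter.Germ 𝓕 ℂ)
    (hφ : (φ : ℝ → Filter.Germ 𝓕 ℂ) = ∑ h, γ h • ind 𝓕 (p h.castSucc) (p h.succ))
    (hχ : (χ : ℝ → Filter.Germ 𝓕 ℂ) = ∑ h, δ h • ind 𝓕 (p h.castSucc) (p h.succ)) :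
    innerS 𝓕 I φ χ = ∑ h, (Filter.Germ.const ((p h.succ - p h.castSucc : ℝ) : ℂ))
      * (conjG 𝓕 (γ h) * δ h) := by
  have hmul : conjF 𝓕 (φ : ℝ → Filter.Germ 𝓕 ℂ) * (χ : ℝ → Filter.Germ 𝓕 ℂ)
      = ∑ h, (conjG 𝓕 (γ h) * δ h) • ind 𝓕 (p h.castSucc) (p h.succ) := by
    rw [hφ, hχ, conjF_part, part_mul 𝓕 hp]
  have hsub : (⟨conjF 𝓕 (φ : ℝ → Filter.Germ 𝓕 ℂ) * (χ : ℝ → Filter.Germ 𝓕 ℂ),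
      mul_mem_step 𝓕 (conjF_mem 𝓕 φ.2) χ.2⟩ : StepF 𝓕)
      = ∑ h, (⟨(conjG 𝓕 (γ h) * δ h) • ind 𝓕 (p h.castSucc) (p h.succ),
          smul_ind_mem 𝓕 _ _ _⟩ : StepF 𝓕) := by
    apply Subtype.ext
    rw [Submodule.coe_sum]
    exact hmul
  rw [innerS, hsub, map_sum]
  refine Finset.sum_congr rfl fun h _ => ?_
  exact hI (p h.castSucc) (p h.succ) (hp h.castSucc_lt_succ.le) _

lemma innerS_conj (𝓕 : Filter ℕ)
    (I : StepF 𝓕 →ₗ[Filter.Germ 𝓕 ℂ] Filter.Germ 𝓕 ℂ) (hI : IsStepIntegral 𝓕 I)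
    (φ χ : StepF 𝓕) : innerS 𝓕 I χ φ = conjG 𝓕 (innerS 𝓕 I φ χ) := by
  obtain ⟨m, p, hp, γ, δ, hφ, hχ⟩ := decomp2 𝓕 φ χ
  rw [innerS_formula 𝓕 I hI hp φ χ γ δ hφ hχ, innerS_formula 𝓕 I hI hp χ φ δ γ hχ hφ,
    conjG_sum]
  refine Finset.sum_congr rfl fun h _ => ?_
  rw [conjG_mul, conjG_mul, conjG_const_real, conjG_conjG]
  ring

-- sesquilinearity
lemma innerS_add_right (𝓕 : Filter ℕ)
    (I : StepF 𝓕 →ₗ[Filter.Germ 𝓕 ℂ] Filter.Germ 𝓕 ℂ)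
    (ψ χ χ' : StepF 𝓕) : innerS 𝓕 I ψ (χ + χ') = innerS 𝓕 I ψ χ + innerS 𝓕 I ψ χ' := by
  rw [innerS, innerS, innerS, ← map_add]
  congr 1
  apply Subtype.ext
  show conjF 𝓕 ↑ψ * ↑(χ + χ') = conjF 𝓕 ↑ψ * ↑χ + conjF 𝓕 ↑ψ * ↑χ'
  rw [Submodule.coe_add, mul_add]

lemma innerS_smul_right (𝓕 : Filter ℕ)
    (I : StepF 𝓕 →ₗ[Filter.Germ 𝓕 ℂ] Filter.Germ 𝓕 ℂ)
    (c : Filter.Germ 𝓕 ℂ) (ψ χ : StepF 𝓕) :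
    innerS 𝓕 I ψ (c • χ) = c * innerS 𝓕 I ψ χ := by
  have key : (⟨conjF 𝓕 (ψ : ℝ → Filter.Germ 𝓕 ℂ) * ((c • χ : StepF 𝓕) : ℝ → Filter.Germ 𝓕 ℂ),
      mul_mem_step 𝓕 (conjF_mem 𝓕 ψ.2) (c • χ : StepF 𝓕).2⟩ : StepF 𝓕)
      = c • (⟨conjF 𝓕 (ψ : ℝ → Filter.Germ 𝓕 ℂ) * (χ : ℝ → Filter.Germ 𝓕 ℂ),
      mul_mem_step 𝓕 (conjF_mem 𝓕 ψ.2) χ.2⟩ : StepF 𝓕) := by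
    apply Subtype.ext
    show conjF 𝓕 ↑ψ * ↑(c • χ) = c • (conjF 𝓕 ↑ψ * ↑χ)
    rw [Submodule.coe_smul, mul_smul_comm]
  rw [innerS, key, map_smul, smul_eq_mul, innerS]

lemma innerS_sub_right (𝓕 : Filter ℕ)
    (I : StepF 𝓕 →ₗ[Filter.Germ 𝓕 ℂ] Filter.Germ 𝓕 ℂ)
    (ψ χ χ' : StepF 𝓕) : innerS 𝓕 I ψ (χ - χ') = innerS 𝓕 I ψ χ - innerS 𝓕 I ψ χ' := by
  have := innerS_add_right 𝓕 I ψ (χ - χ') χ'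
  rw [sub_add_cancel] at this
  exact eq_sub_of_add_eq this.symm

lemma innerS_sub_left (𝓕 : Filter ℕ)
    (I : StepF 𝓕 →ₗ[Filter.Germ 𝓕 ℂ] Filter.Germ 𝓕 ℂ) (hI : IsStepIntegral 𝓕 I)
    (ψ ψ' χ : StepF 𝓕) : innerS 𝓕 I (ψ - ψ') χ = innerS 𝓕 I ψ χ - innerS 𝓕 I ψ' χ := by
  rw [innerS_conj 𝓕 I hI χ (ψ - ψ'), innerS_sub_right, conjG_sub,
    ← innerS_conj 𝓕 I hI χ ψ, ← innerS_conj 𝓕 I hI χ ψ']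

lemma innerS_smul_left (𝓕 : Filter ℕ)
    (I : StepF 𝓕 →ₗ[Filter.Germ 𝓕 ℂ] Filter.Germ 𝓕 ℂ) (hI : IsStepIntegral 𝓕 I)
    (c : Filter.Germ 𝓕 ℂ) (ψ χ : StepF 𝓕) :
    innerS 𝓕 I (c • ψ) χ = conjG 𝓕 c * innerS 𝓕 I ψ χ := by
  rw [innerS_conj 𝓕 I hI χ (c • ψ), innerS_smul_right, conjG_mul,
    ← innerS_conj 𝓕 I hI χ ψ]


lemma expandS (𝓕 : Filter ℕ)
    (I : StepF 𝓕 →ₗ[Filter.Germ 𝓕 ℂ] Filter.Germ 𝓕 ℂ) (hI : IsStepIntegral 𝓕 I)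
    (X Y ψ : StepF 𝓕) (c d : Filter.Germ 𝓕 ℂ) :
    innerS 𝓕 I (X - c • ψ) (Y - d • ψ) =
      innerS 𝓕 I X Y - d * innerS 𝓕 I X ψ - conjG 𝓕 c * innerS 𝓕 I ψ Y
        + conjG 𝓕 c * (d * innerS 𝓕 I ψ ψ) := by
  simp only [innerS_sub_left 𝓕 I hI, innerS_sub_right, innerS_smul_left 𝓕 I hI,
    innerS_smul_right]
  ring

lemma germ_coe_sum (𝓕 : Filter ℕ) {m : ℕ} (F : Fin m → ℕ → ℂ) (s : Finset (Fin m)) :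
    (↑(fun n => ∑ h ∈ s, F h n) : Filter.Germ 𝓕 ℂ) = ∑ h ∈ s, (↑(F h) : Filter.Germ 𝓕 ℂ) := by
  classical
  induction s using Finset.induction_on with
  | empty => simp only [Finset.sum_empty]; rfl
  | insert a s hnotmem ih =>
    rw [Finset.sum_insert hnotmem, ← ih, ← Filter.Germ.coe_add]
    congr 1
    funext n
    rw [Pi.add_apply, Finset.sum_insert hnotmem]

lemma pointwise_cs (m : ℕ) (ℓ : Fin m → ℝ) (hℓ : ∀ h, 0 ≤ ℓ h) (x y : Fin m → ℂ) :
    ‖(∑ h, (ℓ h : ℂ) * ((starRingEnd ℂ) (x h) * y h)) -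
      (starRingEnd ℂ) (∑ h, (ℓ h : ℂ) * ((starRingEnd ℂ) (x h) * y h))‖ / 2
    ≤ Real.sqrt (∑ h, ℓ h * Complex.normSq (x h)) *
      Real.sqrt (∑ h, ℓ h * Complex.normSq (y h)) := by
  set W : ℂ := ∑ h, (ℓ h : ℂ) * ((starRingEnd ℂ) (x h) * y h) with hW
  have step1 : ‖W - (starRingEnd ℂ) W‖ / 2 = |W.im| := by
    rw [Complex.sub_conj, norm_mul, Complex.norm_I, Complex.norm_real, Real.norm_eq_abs, mul_one, abs_mul]
    norm_num
  rw [step1]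
  have step2 : |W.im| ≤ ‖W‖ := Complex.abs_im_le_norm W
  have step3 : ‖W‖ ≤ ∑ h, ℓ h * (‖x h‖ * ‖y h‖) := by
    refine (norm_sum_le _ _).trans_eq (Finset.sum_congr rfl fun h _ => ?_)
    rw [norm_mul, norm_mul, Complex.norm_real, Real.norm_eq_abs, abs_of_nonneg (hℓ h), Complex.norm_conj]
  set A : ℝ := ∑ h, ℓ h * Complex.normSq (x h) with hA
  set B : ℝ := ∑ h, ℓ h * Complex.normSq (y h) with hB
  have hA0 : 0 ≤ A := Finset.sum_nonneg fun h _ => mul_nonneg (hℓ h) (Complex.normSq_nonneg _)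
  have hB0 : 0 ≤ B := Finset.sum_nonneg fun h _ => mul_nonneg (hℓ h) (Complex.normSq_nonneg _)
  have step4 : ∑ h, ℓ h * (‖x h‖ * ‖y h‖) ≤
      Real.sqrt A * Real.sqrt B := by
    have cs := Finset.sum_mul_sq_le_sq_mul_sq Finset.univ
      (fun h => Real.sqrt (ℓ h) * ‖x h‖)
      (fun h => Real.sqrt (ℓ h) * ‖y h‖)
    have e1 : ∀ h : Fin m, (Real.sqrt (ℓ h) * ‖x h‖) *
        (Real.sqrt (ℓ h) * ‖y h‖) = ℓ h * (‖x h‖ * ‖y h‖) := by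
      intro h
      rw [show (Real.sqrt (ℓ h) * ‖x h‖) * (Real.sqrt (ℓ h) * ‖y h‖)
          = (Real.sqrt (ℓ h) * Real.sqrt (ℓ h)) * (‖x h‖ * ‖y h‖) by ring,
        Real.mul_self_sqrt (hℓ h)]
    have e2 : ∀ h : Fin m, (Real.sqrt (ℓ h) * ‖x h‖) ^ 2
        = ℓ h * Complex.normSq (x h) := by
      intro h
      rw [mul_pow, Real.sq_sqrt (hℓ h), Complex.sq_norm]
    have e3 : ∀ h : Fin m, (Real.sqrt (ℓ h) * ‖y h‖) ^ 2
        = ℓ h * Complex.normSq (y h) := by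
      intro h
      rw [mul_pow, Real.sq_sqrt (hℓ h), Complex.sq_norm]
    rw [Finset.sum_congr rfl fun h _ => e1 h, Finset.sum_congr rfl fun h _ => e2 h,
      Finset.sum_congr rfl fun h _ => e3 h] at cs
    have hS0 : 0 ≤ ∑ h, ℓ h * (‖x h‖ * ‖y h‖) :=
      Finset.sum_nonneg fun h _ => mul_nonneg (hℓ h)
        (mul_nonneg (norm_nonneg _) (norm_nonneg _))
    rw [← Real.sqrt_mul hA0]
    exact (Real.le_sqrt hS0 (mul_nonneg hA0 hB0)).2 cs
  linarith

lemma toC_coe (𝓕 : Filter ℕ) (f : ℕ → ℝ) :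
    toC 𝓕 (↑f : Filter.Germ 𝓕 ℝ) = ↑(fun n => ((f n : ℝ) : ℂ)) := by
  rw [toC, Filter.Germ.map_coe]; rfl

lemma toC_inj (𝓕 : Filter ℕ) {u v : Filter.Germ 𝓕 ℝ} (h : toC 𝓕 u = toC 𝓕 v) : u = v := by
  induction u using Filter.Germ.inductionOn with
  | h f => induction v using Filter.Germ.inductionOn with
    | h g =>
      rw [toC_coe, toC_coe, Filter.Germ.coe_eq] at h
      rw [Filter.Germ.coe_eq]
      exact h.mono fun n hn => Complex.ofReal_inj.1 hn

lemma sqrtG_coe (𝓕 : Filter ℕ) (f : ℕ → ℝ) :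
    sqrtG 𝓕 (↑f : Filter.Germ 𝓕 ℝ) = ↑(fun n => Real.sqrt (f n)) := by
  rw [sqrtG, Filter.Germ.map_coe]; rfl

lemma absG_coe (𝓕 : Filter ℕ) (f : ℕ → ℂ) :
    absG 𝓕 (↑f : Filter.Germ 𝓕 ℂ) = ↑(fun n => ‖f n‖) := by
  rw [absG, Filter.Germ.map_coe]; rfl

lemma sum_const_formula (𝓕 : Filter ℕ) {m : ℕ} (ℓ : Fin m → ℝ)
    (γ δ : Fin m → Filter.Germ 𝓕 ℂ) (g d : Fin m → ℕ → ℂ)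
    (hg : ∀ h, (↑(g h) : Filter.Germ 𝓕 ℂ) = γ h)
    (hd : ∀ h, (↑(d h) : Filter.Germ 𝓕 ℂ) = δ h) :
    ∑ h, (Filter.Germ.const ((ℓ h : ℝ) : ℂ) : Filter.Germ 𝓕 ℂ) * (conjG 𝓕 (γ h) * δ h)
      = ↑(fun n => ∑ h, (ℓ h : ℂ) * ((starRingEnd ℂ) (g h n) * d h n)) := by
  rw [germ_coe_sum]
  refine Finset.sum_congr rfl fun h _ => ?_
  rw [← hg h, ← hd h, conjG_coe,
    show (Filter.Germ.const ((ℓ h : ℝ) : ℂ) : Filter.Germ 𝓕 ℂ)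
      = ↑(fun _ : ℕ => ((ℓ h : ℝ) : ℂ)) from rfl,
    ← Filter.Germ.coe_mul, ← Filter.Germ.coe_mul]
  rfl

/-- Extended Heisenberg Uncertainty Relation, Theorem 2.1:
for Hermitian `A, B` and a state `ψ` with `⟨ψ, ψ⟩ = 1`,
`Δ_ψA · Δ_ψB ≥ |⟨[A, B]⟩_ψ| / 2` in `ℝ_𝓕`, where `Δ_ψA = sqrt(⟨A²⟩_ψ − ⟨A⟩_ψ²)`,
the variances `⟨A²⟩_ψ − ⟨A⟩_ψ²`, `⟨B²⟩_ψ − ⟨B⟩_ψ²` being regarded as elements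
`u, v` of `ℝ_𝓕` via the embedding `ℝ_𝓕 → ℂ_𝓕`. -/
theorem stmt_17 (𝓕 : Filter ℕ)
    (I : StepF 𝓕 →ₗ[Filter.Germ 𝓕 ℂ] Filter.Germ 𝓕 ℂ) (hI : IsStepIntegral 𝓕 I)
    (A B : StepF 𝓕 →ₗ[Filter.Germ 𝓕 ℂ] StepF 𝓕)
    (hA : IsHermitianOp 𝓕 I A) (hB : IsHermitianOp 𝓕 I B)
    (ψ : StepF 𝓕) (hψ : innerS 𝓕 I ψ ψ = 1)
    (u v : Filter.Germ 𝓕 ℝ)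
    (hu : toC 𝓕 u = innerS 𝓕 I ψ (A (A ψ)) - (innerS 𝓕 I ψ (A ψ)) ^ 2)
    (hv : toC 𝓕 v = innerS 𝓕 I ψ (B (B ψ)) - (innerS 𝓕 I ψ (B ψ)) ^ 2) :
    leGerm 𝓕 (absG 𝓕 (innerS 𝓕 I ψ ((A ∘ₗ B - B ∘ₗ A) ψ)) / 2)
      (sqrtG 𝓕 u * sqrtG 𝓕 v) := by
  classical
  set α := innerS 𝓕 I ψ (A ψ) with hα
  set β := innerS 𝓕 I ψ (B ψ) with hβ
  have hαr : conjG 𝓕 α = α := by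
    rw [hα, ← innerS_conj 𝓕 I hI ψ (A ψ), hA]
  have hβr : conjG 𝓕 β = β := by
    rw [hβ, ← innerS_conj 𝓕 I hI ψ (B ψ), hB]
  set φ1 : StepF 𝓕 := A ψ - α • ψ with hφ1
  set χ1 : StepF 𝓕 := B ψ - β • ψ with hχ1
  have hAψψ : innerS 𝓕 I (A ψ) ψ = α := by rw [hA]
  have hBψψ : innerS 𝓕 I (B ψ) ψ = β := by rw [hB]
  have e1 : innerS 𝓕 I φ1 φ1 = toC 𝓕 u := by
    rw [hφ1, expandS 𝓕 I hI, hψ, hαr, hAψψ, hA ψ (A ψ), hu]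
    ring
  have e2 : innerS 𝓕 I χ1 χ1 = toC 𝓕 v := by
    rw [hχ1, expandS 𝓕 I hI, hψ, hβr, hBψψ, hB ψ (B ψ), hv]
    ring
  set w := innerS 𝓕 I φ1 χ1 with hwdef
  have hw : w = innerS 𝓕 I (A ψ) (B ψ) - α * β := by
    rw [hwdef, hφ1, hχ1, expandS 𝓕 I hI, hψ, hαr, hAψψ, hβ]
    ring
  have e3 : innerS 𝓕 I ψ ((A ∘ₗ B - B ∘ₗ A) ψ) = w - conjG 𝓕 w := by
    have happ : (A ∘ₗ B - B ∘ₗ A) ψ = A (B ψ) - B (A ψ) := by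
      simp [LinearMap.sub_apply, LinearMap.comp_apply]
    rw [happ, innerS_sub_right, ← hA ψ (B ψ), ← hB ψ (A ψ), hw, conjG_sub, conjG_mul, hαr,
      hβr, ← innerS_conj 𝓕 I hI (A ψ) (B ψ)]
    ring
  obtain ⟨m, p, hp, γ, δ, hφd, hχd⟩ := decomp2 𝓕 φ1 χ1
  set ℓ : Fin m → ℝ := fun h => p h.succ - p h.castSucc with hℓdef
  have hℓ : ∀ h, 0 ≤ ℓ h := fun h => sub_nonneg.2 (hp h.castSucc_lt_succ.le)
  have hgex : ∀ h : Fin m, ∃ f : ℕ → ℂ, (↑f : Filter.Germ 𝓕 ℂ) = γ h := fun h =>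
    Filter.Germ.inductionOn (γ h) fun f => ⟨f, rfl⟩
  have hdex : ∀ h : Fin m, ∃ f : ℕ → ℂ, (↑f : Filter.Germ 𝓕 ℂ) = δ h := fun h =>
    Filter.Germ.inductionOn (δ h) fun f => ⟨f, rfl⟩
  choose g hg using hgex
  choose d hd using hdex
  set U : ℕ → ℝ := fun n => ∑ h, ℓ h * Complex.normSq (g h n) with hU
  set V : ℕ → ℝ := fun n => ∑ h, ℓ h * Complex.normSq (d h n) with hV
  set W : ℕ → ℂ := fun n => ∑ h, (ℓ h : ℂ) * ((starRingEnd ℂ) (g h n) * d h n) with hW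
  have normSq_form : ∀ (f : Fin m → ℕ → ℂ) (n : ℕ),
      ((∑ h, ℓ h * Complex.normSq (f h n) : ℝ) : ℂ)
        = ∑ h, (ℓ h : ℂ) * ((starRingEnd ℂ) (f h n) * f h n) := by
    intro f n
    push_cast
    refine Finset.sum_congr rfl fun h _ => ?_
    rw [mul_comm ((starRingEnd ℂ) (f h n)), Complex.mul_conj]
  have hu' : u = ↑U := by
    apply toC_inj 𝓕
    rw [← e1, innerS_formula 𝓕 I hI hp φ1 φ1 γ γ hφd hφd,
      sum_const_formula 𝓕 ℓ γ γ g g hg hg, toC_coe]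
    congr 1
    funext n
    rw [hU, normSq_form g n]
  have hv' : v = ↑V := by
    apply toC_inj 𝓕
    rw [← e2, innerS_formula 𝓕 I hI hp χ1 χ1 δ δ hχd hχd,
      sum_const_formula 𝓕 ℓ δ δ d d hd hd, toC_coe]
    congr 1
    funext n
    rw [hV, normSq_form d n]
  have hw' : w = ↑W := by
    rw [hwdef, innerS_formula 𝓕 I hI hp φ1 χ1 γ δ hφd hχd,
      sum_const_formula 𝓕 ℓ γ δ g d hg hd]
  have habs : absG 𝓕 (innerS 𝓕 I ψ ((A ∘ₗ B - B ∘ₗ A) ψ)) / 2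
      = ↑(fun n => ‖W n - (starRingEnd ℂ) (W n)‖ / 2) := by
    rw [e3, hw', conjG_coe, ← Filter.Germ.coe_sub, absG_coe,
      show (2 : Filter.Germ 𝓕 ℝ) = ↑(fun _ : ℕ => (2 : ℝ)) from rfl, ← Filter.Germ.coe_div]
    rfl
  have hsq : sqrtG 𝓕 u * sqrtG 𝓕 v
      = ↑(fun n => Real.sqrt (U n) * Real.sqrt (V n)) := by
    rw [hu', hv', sqrtG_coe, sqrtG_coe, ← Filter.Germ.coe_mul]
    rfl
  rw [leGerm, RplusGerm, habs, hsq]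
  rw [Set.mem_setOf_eq, ← Filter.Germ.coe_sub, Filter.Germ.liftPred_coe]
  refine Filter.Eventually.of_forall fun n => ?_
  have := pointwise_cs m ℓ hℓ (fun h => g h n) (fun h => d h n)
  simp only [Pi.sub_apply]
  exact sub_nonneg.2 this

end
end
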